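/- Let G be a variable-regular Tanner graph with variable degree d_v = 3 and girth g ≥ 6, and let S be a stopping set whose induced subgraph contains a check node of degree 3 (i.e., S is a non-elementary stopping set witnessed by a degree-3 check node). Then |S| ≥ 5. -/

import Mathlib

/-- Degree of a variable node `v` in the Tanner graph given by adjacency `adj`. -/
def varDeg {V C : Type*} [Fintype C] (adj : V → C → Prop) [∀ v c, Decidable (adj v c)] (v : V) : ℕ :=
  (Finset.univ.filter (fun c => adj v c)).card

/-- Degree of a check node `c` in the subgraph induced by the set `S` of variable nodes. -/
def chkDeg {V C : Type*} [DecidableEq V] (adj : V → C → Prop) [∀ v c, Decidable (adj v c)]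
    (S : Finset V) (c : C) : ℕ :=
  (S.filter (fun v => adj v c)).card

/-- The set of check nodes of odd degree in the subgraph induced by `S`. -/
def oddChks {V C : Type*} [DecidableEq V] [Fintype C] (adj : V → C → Prop) [∀ v c, Decidable (adj v c)]
    (S : Finset V) : Finset C :=
  Finset.univ.filter (fun c => Odd (chkDeg adj S c))

/-- The Tanner graph of the adjacency relation `adj`, as a simple graph on `V ⊕ C`. -/
def tanner {V C : Type*} (adj : V → C → Prop) : SimpleGraph (V ⊕ C) where
  Adj x y := (∃ v c, x = Sum.inl v ∧ y = Sum.inr c ∧ adj v c) ∨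
    (∃ v c, x = Sum.inr c ∧ y = Sum.inl v ∧ adj v c)
  symm := by
    refine ⟨?_⟩; rintro x y (⟨v, c, h1, h2, h3⟩ | ⟨v, c, h1, h2, h3⟩)
    · exact Or.inr ⟨v, c, h2, h1, h3⟩
    · exact Or.inl ⟨v, c, h2, h1, h3⟩
  loopless := by
    refine ⟨?_⟩; rintro x (⟨v, c, h1, h2, _⟩ | ⟨v, c, h1, h2, _⟩) <;> subst h1 <;> simp at h2


lemma no4cycle {V C : Type*} (adj : V → C → Prop)
    (hgirth : (6 : ℕ∞) ≤ (tanner adj).egirth)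
    {v v' : V} {c c' : C} (hvv : v ≠ v') (hcc : c ≠ c')
    (h1 : adj v c) (h2 : adj v' c) (h3 : adj v c') (h4 : adj v' c') : False := by
  have a1 : (tanner adj).Adj (.inl v) (.inr c) := Or.inl ⟨v, c, rfl, rfl, h1⟩
  have a2 : (tanner adj).Adj (.inr c) (.inl v') := Or.inr ⟨v', c, rfl, rfl, h2⟩
  have a3 : (tanner adj).Adj (.inl v') (.inr c') := Or.inl ⟨v', c', rfl, rfl, h4⟩
  have a4 : (tanner adj).Adj (.inr c') (.inl v) := Or.inr ⟨v, c', rfl, rfl, h3⟩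
  let W : (tanner adj).Walk (.inl v) (.inl v) :=
    .cons a1 (.cons a2 (.cons a3 (.cons a4 .nil)))
  have hcyc : W.IsCycle := by
    simp [W, SimpleGraph.Walk.isCycle_def, SimpleGraph.Walk.isTrail_def,
      List.nodup_cons, hvv, hcc, hvv.symm, hcc.symm]
  have := SimpleGraph.le_egirth.mp hgirth _ W hcyc
  simp only [W, SimpleGraph.Walk.length_cons, SimpleGraph.Walk.length_nil] at this
  exact absurd this (by norm_num)

/-- In a variable-regular Tanner graph with variable degree 3 and girth ≥ 6,
every stopping set `S` (no degree-1 check node in `G(S)`) whose induced subgraph contains a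
check node of degree 3 satisfies `|S| ≥ 5`. -/
theorem ness_size_ge_five {V C : Type*} [Fintype C] [DecidableEq V]
    (adj : V → C → Prop) [∀ v c, Decidable (adj v c)]
    (hreg : ∀ v : V, varDeg adj v = 3)
    (hgirth : (6 : ℕ∞) ≤ (tanner adj).egirth)
    (S : Finset V) (hstop : ∀ c : C, chkDeg adj S c ≠ 1)
    (w : C) (hw : chkDeg adj S w = 3) :
    5 ≤ S.card := by
  classical
  by_contra hlt
  push_neg at hlt
  have hS4 : S.card ≤ 4 := by omega
  set Nw := S.filter (fun v => adj v w) with hNw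
  have hNwS : Nw ⊆ S := Finset.filter_subset _ _
  have hNw3 : Nw.card = 3 := hw
  obtain ⟨v1, v2, v3, h12, h13, h23, hNweq⟩ := Finset.card_eq_three.mp hNw3
  have hmem : ∀ x ∈ Nw, x ∈ S ∧ adj x w := by
    intro x hx
    exact ⟨(Finset.mem_filter.mp hx).1, (Finset.mem_filter.mp hx).2⟩
  have hv1 : v1 ∈ Nw := by rw [hNweq]; simp
  have hv2 : v2 ∈ Nw := by rw [hNweq]; simp
  -- for a variable x in Nw and a check c ≠ w adjacent to x, there is a second
  -- neighbor of c in S, which moreover lies outside Nw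
  have key : ∀ x ∈ Nw, ∀ c, adj x c → c ≠ w → ∃ u ∈ S \ Nw, adj u c := by
    intro x hx c hxc hcw
    obtain ⟨hxS, hxw⟩ := hmem x hx
    have hx1 : x ∈ S.filter (fun v => adj v c) := Finset.mem_filter.mpr ⟨hxS, hxc⟩
    have hcard : 1 < (S.filter (fun v => adj v c)).card := by
      have h1 : (S.filter (fun v => adj v c)).card ≠ 1 := hstop c
      have h2 : 0 < (S.filter (fun v => adj v c)).card := Finset.card_pos.mpr ⟨x, hx1⟩
      omega
    obtain ⟨u, hu, hux⟩ := Finset.exists_mem_ne hcard x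
    obtain ⟨huS, huc⟩ := Finset.mem_filter.mp hu
    refine ⟨u, Finset.mem_sdiff.mpr ⟨huS, ?_⟩, huc⟩
    intro huNw
    have huw := (hmem u huNw).2
    exact no4cycle adj hgirth hux.symm hcw hxc huc hxw huw
  -- the two other checks of v1 and v2
  have hFcard : ∀ x ∈ Nw, ((Finset.univ.filter (fun c => adj x c)).erase w).card = 2 := by
    intro x hx
    have hxw := (hmem x hx).2
    have : w ∈ Finset.univ.filter (fun c => adj x c) := by simp [hxw]
    rw [Finset.card_erase_of_mem this]
    have := hreg x
    unfold varDeg at this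
    omega
  set F1 := (Finset.univ.filter (fun c => adj v1 c)).erase w with hF1
  set F2 := (Finset.univ.filter (fun c => adj v2 c)).erase w with hF2
  have hdisj : Disjoint F1 F2 := by
    rw [Finset.disjoint_left]
    intro c hc1 hc2
    have hcw : c ≠ w := Finset.ne_of_mem_erase hc1
    have h1c : adj v1 c := (Finset.mem_filter.mp (Finset.mem_of_mem_erase hc1)).2
    have h2c : adj v2 c := (Finset.mem_filter.mp (Finset.mem_of_mem_erase hc2)).2
    exact no4cycle adj hgirth h12 hcw h1c h2c (hmem v1 hv1).2 (hmem v2 hv2).2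
  have hU4 : (F1 ∪ F2).card = 4 := by
    rw [Finset.card_union_of_disjoint hdisj, hFcard v1 hv1, hFcard v2 hv2]
  -- every check in F1 ∪ F2 has a neighbor in S \ Nw
  have hsub : F1 ∪ F2 ⊆ (S \ Nw).biUnion (fun u => Finset.univ.filter (fun c => adj u c)) := by
    intro c hc
    have : ∃ u ∈ S \ Nw, adj u c := by
      rcases Finset.mem_union.mp hc with h | h
      · exact key v1 hv1 c (Finset.mem_filter.mp (Finset.mem_of_mem_erase h)).2
          (Finset.ne_of_mem_erase h)
      · exact key v2 hv2 c (Finset.mem_filter.mp (Finset.mem_of_mem_erase h)).2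
          (Finset.ne_of_mem_erase h)
    obtain ⟨u, hu, huc⟩ := this
    exact Finset.mem_biUnion.mpr ⟨u, hu, by simp [huc]⟩
  have hDcard : (S \ Nw).card ≤ 1 := by
    rw [Finset.card_sdiff_of_subset hNwS]
    omega
  have hle : (F1 ∪ F2).card ≤ ∑ u ∈ S \ Nw, (Finset.univ.filter (fun c => adj u c)).card :=
    le_trans (Finset.card_le_card hsub) (Finset.card_biUnion_le)
  have hsum : ∑ u ∈ S \ Nw, (Finset.univ.filter (fun c => adj u c)).card ≤ 3 := by
    calc ∑ u ∈ S \ Nw, (Finset.univ.filter (fun c => adj u c)).card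
        = ∑ u ∈ S \ Nw, 3 := Finset.sum_congr rfl (fun u _ => hreg u)
      _ = (S \ Nw).card * 3 := by rw [Finset.sum_const, smul_eq_mul]
      _ ≤ 3 := by omega
  omega
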